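/- For every positive integer k there exist infinitely many graphs G such that G is k-connected and G contains two longest paths whose intersection has exactly k vertices. More precisely, for every positive integer ℓ there exists a k-connected graph on k + 2ℓ(k+1) vertices containing two longest paths that intersect in exactly k vertices. -/

import Mathlib

open SimpleGraph

-- counting lemma
lemma cnt_aux {α : Type*} (R : α → α → Prop) (p : α → Bool)
    (hR : ∀ a b, R a b → p a → p b → False) :
    ∀ l : List α, l.Chain' R →
      l.countP p ≤ l.countP (fun x => !p x) + (match l with | [] => 0 | a :: _ => if p a then 1 else 0)
  | [], _ => by simp
  | [a], _ => by by_cases h : p a <;> simp [List.countP_cons, h]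
  | a :: b :: t, hc => by
    have hc' : (b :: t).Chain' R := hc.tail
    have hab : R a b := (List.isChain_cons_cons.mp hc).1
    have ih := cnt_aux R p hR (b :: t) hc'
    by_cases ha : p a <;> by_cases hb : p b
    · exact (hR a b hab ha hb).elim
    · simp only [List.countP_cons, ha, hb] at ih ⊢
      simp [ha, hb] at ih ⊢
      omega
    · simp only [List.countP_cons, ha, hb] at ih ⊢
      simp [ha, hb] at ih ⊢
      omega
    · simp only [List.countP_cons, ha, hb] at ih ⊢
      simp [ha, hb] at ih ⊢
      omega

-- zigzag walk
def zig {V : Type*} {G : SimpleGraph V} (a b : ℕ → V)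
    (hba : ∀ i, G.Adj (b (i+1)) (a i)) (hab : ∀ i, G.Adj (a i) (b i)) :
    (n : ℕ) → G.Walk (b n) (b 0)
  | 0 => Walk.nil
  | (n+1) => Walk.cons (hba n) (Walk.cons (hab n) (zig a b hba hab n))

lemma zig_length {V : Type*} {G : SimpleGraph V} (a b : ℕ → V)
    (hba : ∀ i, G.Adj (b (i+1)) (a i)) (hab : ∀ i, G.Adj (a i) (b i)) :
    ∀ n, (zig a b hba hab n).length = 2 * n
  | 0 => rfl
  | (n+1) => by simp [zig, zig_length a b hba hab n]; ring

lemma zig_support {V : Type*} {G : SimpleGraph V} (a b : ℕ → V)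
    (hba : ∀ i, G.Adj (b (i+1)) (a i)) (hab : ∀ i, G.Adj (a i) (b i)) :
    ∀ n x, x ∈ (zig a b hba hab n).support ↔ (∃ i ≤ n, x = b i) ∨ (∃ i < n, x = a i)
  | 0, x => by
    constructor
    · intro h
      simp only [zig, Walk.support_nil, List.mem_singleton] at h
      exact Or.inl ⟨0, le_refl 0, h⟩
    · rintro (⟨i, hi, rfl⟩ | ⟨i, hi, rfl⟩)
      · interval_cases i
        simp [zig]
      · omega
  | (n+1), x => by
    simp only [zig, Walk.support_cons, List.mem_cons, zig_support a b hba hab n]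
    constructor
    · rintro (rfl | rfl | ⟨i, hi, rfl⟩ | ⟨i, hi, rfl⟩)
      · exact Or.inl ⟨n+1, le_refl _, rfl⟩
      · exact Or.inr ⟨n, by omega, rfl⟩
      · exact Or.inl ⟨i, by omega, rfl⟩
      · exact Or.inr ⟨i, by omega, rfl⟩
    · rintro (⟨i, hi, rfl⟩ | ⟨i, hi, rfl⟩)
      · rcases Nat.lt_or_ge i (n+1) with h | h
        · exact Or.inr (Or.inr (Or.inl ⟨i, by omega, rfl⟩))
        · have : i = n+1 := by omega
          subst this; exact Or.inl rfl
      · rcases Nat.lt_or_ge i n with h | h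
        · exact Or.inr (Or.inr (Or.inr ⟨i, h, rfl⟩))
        · have : i = n := by omega
          subst this; exact Or.inr (Or.inl rfl)

lemma zig_isPath {V : Type*} {G : SimpleGraph V} (a b : ℕ → V)
    (hba : ∀ i, G.Adj (b (i+1)) (a i)) (hab : ∀ i, G.Adj (a i) (b i)) (N : ℕ)
    (hbinj : ∀ i j, i ≤ N → j ≤ N → b i = b j → i = j)
    (hainj : ∀ i j, i < N → j < N → a i = a j → i = j)
    (hne : ∀ i j, i < N → j ≤ N → a i ≠ b j) :
    ∀ n, n ≤ N → (zig a b hba hab n).IsPath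
  | 0, _ => Walk.IsPath.nil
  | (n+1), hn => by
    have ih := zig_isPath a b hba hab N hbinj hainj hne n (by omega)
    have h1 : a n ∉ (zig a b hba hab n).support := by
      rw [zig_support]
      rintro (⟨i, hi, h⟩ | ⟨i, hi, h⟩)
      · exact hne n i (by omega) (by omega) h
      · have := hainj n i (by omega) (by omega) h; omega
    have h2 : b (n+1) ∉ (Walk.cons (hab n) (zig a b hba hab n)).support := by
      simp only [Walk.support_cons, List.mem_cons]
      rintro (h | h)
      · exact hne n (n+1) (by omega) (by omega) h.symm
      · rw [zig_support] at h
        rcases h with ⟨i, hi, h⟩ | ⟨i, hi, h⟩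
        · have := hbinj (n+1) i (by omega) (by omega) h; omega
        · exact hne i (n+1) (by omega) (by omega) h.symm
    exact ((ih.cons h1).cons h2)

lemma cnt {α : Type*} (R : α → α → Prop) (p : α → Bool)
    (hR : ∀ a b, R a b → p a → p b → False) (l : List α) (hc : l.Chain' R) :
    l.countP p ≤ l.countP (fun x => !p x) + 1 := by
  have := cnt_aux R p hR l hc
  match l with
  | [] => simp
  | a :: t => simp only at this; split at this <;> omega

lemma count_left_le {k m : ℕ} (l : List (Fin k ⊕ Fin m)) (hl : l.Nodup) :
    l.countP (fun x => !x.isRight) ≤ k := by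
  rw [List.countP_eq_length_filter]
  have hnd : (l.filter (fun x => !x.isRight)).Nodup := hl.filter _
  rw [← List.toFinset_card_of_nodup hnd]
  refine le_trans (Finset.card_le_card (t := Finset.univ.image (Sum.inl : Fin k → Fin k ⊕ Fin m)) ?_) ?_
  · intro x hx
    rw [List.mem_toFinset, List.mem_filter] at hx
    match x, hx with
    | Sum.inl y, _ => exact Finset.mem_image.mpr ⟨y, Finset.mem_univ y, rfl⟩
    | Sum.inr y, h => simp at h
  · rw [Finset.card_image_of_injective _ Sum.inl_injective]
    simp

/-- A graph is `k`-connected if it has more than `k` vertices and deleting any set of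
fewer than `k` vertices leaves a connected graph. -/
def KConnected {V : Type*} [Fintype V] (G : SimpleGraph V) (k : ℕ) : Prop :=
  k < Fintype.card V ∧
    ∀ S : Set V, S.ncard < k → (G.induce Sᶜ).Connected

theorem stmt_9 (k : ℕ) (hk : 0 < k) (ℓ : ℕ) (hℓ : 0 < ℓ) :
    ∃ (V : Type) (_ : Fintype V) (G : SimpleGraph V),
      Fintype.card V = k + 2 * ℓ * (k + 1) ∧
      KConnected G k ∧
      ∃ (p₁ p₂ q₁ q₂ : V) (P : G.Walk p₁ p₂) (Q : G.Walk q₁ q₂),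
        P.IsPath ∧ Q.IsPath ∧
        (∀ (u v : V) (W : G.Walk u v), W.IsPath → W.length ≤ P.length) ∧
        (∀ (u v : V) (W : G.Walk u v), W.IsPath → W.length ≤ Q.length) ∧
        ({x | x ∈ P.support} ∩ {x | x ∈ Q.support}).ncard = k := by
  obtain ⟨m, hm⟩ : ∃ m, m = 2 * ℓ * (k + 1) := ⟨_, rfl⟩
  have hm2 : 2 * (k + 1) ≤ m := by
    rw [hm]
    calc 2 * (k+1) = 2 * 1 * (k+1) := by ring
    _ ≤ 2 * ℓ * (k+1) := Nat.mul_le_mul_right _ (by omega)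
  have hm0 : 0 < m := by omega
  let G : SimpleGraph (Fin k ⊕ Fin m) := {
    Adj := fun x y => x ≠ y ∧ (x.isLeft ∨ y.isLeft)
    symm := ⟨fun x y ⟨h1, h2⟩ => ⟨h1.symm, h2.symm⟩⟩
    loopless := ⟨fun x h => h.1 rfl⟩ }
  refine ⟨Fin k ⊕ Fin m, inferInstance, G, by simp [hm], ?_, ?_⟩
  · constructor
    · simp only [Fintype.card_sum, Fintype.card_fin]
      omega
    · intro S hS
      have hex : ∃ i : Fin k, (Sum.inl i : Fin k ⊕ Fin m) ∉ S := by
        by_contra h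
        push_neg at h
        have hsub : Set.range (fun i : Fin k => (Sum.inl i : Fin k ⊕ Fin m)) ⊆ S := by
          rintro x ⟨i, rfl⟩; exact h i
        have h1 : (Set.range (fun i : Fin k => (Sum.inl i : Fin k ⊕ Fin m))).ncard = k := by
          rw [← Set.image_univ, Set.ncard_image_of_injective _ Sum.inl_injective,
            Set.ncard_univ]
          simp
        have := Set.ncard_le_ncard hsub S.toFinite
        omega
      obtain ⟨i, hi⟩ := hex
      have hiL : (Sum.inl i : Fin k ⊕ Fin m) ∈ Sᶜ := hi
      rw [SimpleGraph.connected_iff]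
      refine ⟨?_, ⟨⟨Sum.inl i, hiL⟩⟩⟩
      intro u v
      have key : ∀ w : ↑Sᶜ, (G.induce Sᶜ).Reachable w ⟨Sum.inl i, hiL⟩ := by
        intro w
        by_cases hw : (w : Fin k ⊕ Fin m) = Sum.inl i
        · have : w = ⟨Sum.inl i, hiL⟩ := Subtype.ext hw
          rw [this]
        · refine SimpleGraph.Adj.reachable ?_
          exact ⟨fun h => hw h, Or.inr rfl⟩
      exact (key u).trans (key v).symm
  · -- paths
    have hkm : k < m := by omega
    let a : ℕ → (Fin k ⊕ Fin m) := fun i => Sum.inl ⟨i % k, Nat.mod_lt i hk⟩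
    let b1 : ℕ → (Fin k ⊕ Fin m) := fun i => Sum.inr ⟨i % m, Nat.mod_lt i hm0⟩
    let b2 : ℕ → (Fin k ⊕ Fin m) := fun i => Sum.inr ⟨(k + 1 + i) % m, Nat.mod_lt _ hm0⟩
    have hba1 : ∀ i, G.Adj (b1 (i+1)) (a i) := fun i => ⟨fun h => Sum.inr_ne_inl h, Or.inr rfl⟩
    have hab1 : ∀ i, G.Adj (a i) (b1 i) := fun i => ⟨fun h => Sum.inl_ne_inr h, Or.inl rfl⟩
    have hba2 : ∀ i, G.Adj (b2 (i+1)) (a i) := fun i => ⟨fun h => Sum.inr_ne_inl h, Or.inr rfl⟩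
    have hab2 : ∀ i, G.Adj (a i) (b2 i) := fun i => ⟨fun h => Sum.inl_ne_inr h, Or.inl rfl⟩
    let P := zig a b1 hba1 hab1 k
    let Q := zig a b2 hba2 hab2 k
    have hainj : ∀ i j, i < k → j < k → a i = a j → i = j := by
      intro i j hi hj h
      have h2 : i % k = j % k := congrArg Fin.val (Sum.inl_injective h)
      rwa [Nat.mod_eq_of_lt hi, Nat.mod_eq_of_lt hj] at h2
    have hb1inj : ∀ i j, i ≤ k → j ≤ k → b1 i = b1 j → i = j := by
      intro i j hi hj h
      have h2 : i % m = j % m := congrArg Fin.val (Sum.inr_injective h)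
      rwa [Nat.mod_eq_of_lt (by omega), Nat.mod_eq_of_lt (by omega)] at h2
    have hb2inj : ∀ i j, i ≤ k → j ≤ k → b2 i = b2 j → i = j := by
      intro i j hi hj h
      have h2 : (k+1+i) % m = (k+1+j) % m := congrArg Fin.val (Sum.inr_injective h)
      rw [Nat.mod_eq_of_lt (by omega), Nat.mod_eq_of_lt (by omega)] at h2
      omega
    have hne1 : ∀ i j, i < k → j ≤ k → a i ≠ b1 j := fun i j _ _ h => Sum.inl_ne_inr h
    have hne2 : ∀ i j, i < k → j ≤ k → a i ≠ b2 j := fun i j _ _ h => Sum.inl_ne_inr h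
    have hPpath : P.IsPath := zig_isPath a b1 hba1 hab1 k hb1inj hainj hne1 k le_rfl
    have hQpath : Q.IsPath := zig_isPath a b2 hba2 hab2 k hb2inj hainj hne2 k le_rfl
    have hPlen : P.length = 2 * k := zig_length a b1 hba1 hab1 k
    have hQlen : Q.length = 2 * k := zig_length a b2 hba2 hab2 k
    have hmax : ∀ (u v : Fin k ⊕ Fin m) (W : G.Walk u v), W.IsPath → W.length ≤ 2 * k := by
      intro u v W hW
      have hchain : W.support.Chain' G.Adj := W.isChain_adj_support
      have hR : ∀ x y : Fin k ⊕ Fin m, G.Adj x y → x.isRight → y.isRight → False := by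
        intro x y hxy hx hy
        rcases hxy.2 with h | h
        · rw [Sum.isLeft_iff] at h
          obtain ⟨z, rfl⟩ := h
          simp at hx
        · rw [Sum.isLeft_iff] at h
          obtain ⟨z, rfl⟩ := h
          simp at hy
      have h1 := cnt G.Adj (fun x => x.isRight) hR W.support hchain
      have h2 := count_left_le W.support hW.support_nodup
      have h3 := List.length_eq_countP_add_countP
        (fun x : Fin k ⊕ Fin m => x.isRight) (l := W.support)
      simp only [decide_not, Bool.decide_eq_true] at h3
      beta_reduce at h1
      have h4 : W.support.length = W.length + 1 := W.length_support
      omega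
    refine ⟨_, _, _, _, P, Q, hPpath, hQpath,
      fun u v W hW => hPlen ▸ hmax u v W hW,
      fun u v W hW => hQlen ▸ hmax u v W hW, ?_⟩
    have hsupP : ∀ x, x ∈ P.support ↔ (∃ i ≤ k, x = b1 i) ∨ (∃ i < k, x = a i) :=
      zig_support a b1 hba1 hab1 k
    have hsupQ : ∀ x, x ∈ Q.support ↔ (∃ i ≤ k, x = b2 i) ∨ (∃ i < k, x = a i) :=
      zig_support a b2 hba2 hab2 k
    have hset : ({x | x ∈ P.support} ∩ {x | x ∈ Q.support}) =
        Set.range (fun y : Fin k => (Sum.inl y : Fin k ⊕ Fin m)) := by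
      ext x
      simp only [Set.mem_inter_iff, Set.mem_setOf_eq, Set.mem_range, hsupP, hsupQ]
      constructor
      · rintro ⟨(⟨i, hi, rfl⟩ | ⟨i, hi, rfl⟩), (⟨j, hj, h⟩ | ⟨j, hj, h⟩)⟩
        · exfalso
          have h2 : i % m = (k+1+j) % m := congrArg Fin.val (Sum.inr_injective h)
          rw [Nat.mod_eq_of_lt (by omega), Nat.mod_eq_of_lt (by omega)] at h2
          omega
        · exact (Sum.inr_ne_inl h).elim
        · exact (Sum.inl_ne_inr h).elim
        · exact ⟨⟨i % k, Nat.mod_lt i hk⟩, rfl⟩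
      · rintro ⟨y, rfl⟩
        have hy : (y : ℕ) < k := y.isLt
        have ha : a (y : ℕ) = Sum.inl y := by
          show Sum.inl _ = Sum.inl y
          congr 1
          exact Fin.ext (Nat.mod_eq_of_lt hy)
        exact ⟨Or.inr ⟨y, hy, ha.symm⟩, Or.inr ⟨y, hy, ha.symm⟩⟩
    rw [hset, ← Set.image_univ, Set.ncard_image_of_injective _ Sum.inl_injective,
      Set.ncard_univ]
    simp
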